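/- arXiv:2206.12899 — 2 statements merged into one kernel-verified Lean document; each statement's English description precedes it below -/
import Mathlib

section
/- Under the hypotheses: p_k ≥ 0 with Σ_k p_k = 1; local iterates satisfy v_k = w₀ - Σ_{t=1}^{E} η_t g_{k,t} with ‖g_{k,t}‖ ≤ G and η_t ≤ η₀ ≤ 2η for all t; v̄ = Σ_k p_k v_k; and w̄ = (1/K) Σ_{l=1}^K v_{i_l} where i_1,…,i_K are i.i.d. with P(i_l = k) = p_k. Then E‖w̄ - v̄‖² ≤ (4/K) η² E² G². -/
open MeasureTheory ProbabilityTheory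

section Aux

variable {Ω : Type*} [MeasurableSpace Ω] {P : Measure Ω} [IsProbabilityMeasure P]
variable {n : ℕ} {X : Ω → Fin n}

lemma aux_repr (f : Fin n → ℝ) (ω : Ω) :
    f (X ω) = ∑ k, Set.indicator (X ⁻¹' {k}) (fun _ => f k) ω := by
  classical
  have h : ∀ k : Fin n, Set.indicator (X ⁻¹' {k}) (fun _ => f k) ω
      = if X ω = k then f k else 0 := by
    intro k
    rw [Set.indicator_apply]
    simp [Set.mem_preimage]
  rw [Finset.sum_congr rfl fun k _ => h k, Finset.sum_ite_eq Finset.univ (X ω) f]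
  simp

lemma aux_integrable (hX : Measurable X) (f : Fin n → ℝ) :
    Integrable (fun ω => f (X ω)) P := by
  rw [show (fun ω => f (X ω)) = fun ω => ∑ k, Set.indicator (X ⁻¹' {k}) (fun _ => f k) ω from
    funext (aux_repr f)]
  exact integrable_finset_sum _ fun k _ =>
    (integrable_const (f k)).indicator (hX (measurableSet_singleton k))

lemma aux_bdd (f : Fin n → ℝ) : ∃ C, ∀ ω, ‖f (X ω)‖ ≤ C :=
  ⟨∑ k, ‖f k‖, fun ω => Finset.single_le_sum (fun k _ => norm_nonneg _) (Finset.mem_univ (X ω))⟩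

lemma aux_integral (hX : Measurable X) (p : Fin n → ℝ) (hp : ∀ k, 0 ≤ p k)
    (hdist : ∀ k, P {ω | X ω = k} = ENNReal.ofReal (p k)) (f : Fin n → ℝ) :
    ∫ ω, f (X ω) ∂P = ∑ k, p k * f k := by
  simp_rw [aux_repr f]
  rw [integral_finset_sum _ fun k _ =>
    (integrable_const (f k)).indicator (hX (measurableSet_singleton k))]
  refine Finset.sum_congr rfl fun k _ => ?_
  rw [integral_indicator_const _ (hX (measurableSet_singleton k))]
  have hs : X ⁻¹' {k} = {ω | X ω = k} := rfl
  rw [hs, measureReal_def, hdist k, ENNReal.toReal_ofReal (hp k), smul_eq_mul]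

lemma aux_var {K : ℕ} (I : Fin K → Ω → Fin n) (hmeas : ∀ l, Measurable (I l))
    (hindep : iIndepFun I P)
    (p : Fin n → ℝ) (hp : ∀ k, 0 ≤ p k)
    (hdist : ∀ l k, P {ω | I l ω = k} = ENNReal.ofReal (p k))
    (f : Fin n → ℝ) (hf0 : ∑ k, p k * f k = 0) :
    ∫ ω, (∑ l, f (I l ω))^2 ∂P = K * ∑ k, p k * (f k)^2 := by
  have hmf : ∀ (h : Fin n → ℝ) (l : Fin K), Measurable (fun ω => h (I l ω)) :=
    fun h l => (measurable_from_top (f := h)).comp (hmeas l)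
  have hint : ∀ l m, Integrable (fun ω => f (I l ω) * f (I m ω)) P := fun l m =>
    (aux_integrable (hmeas m) f).bdd_mul (hmf f l).aestronglyMeasurable (ae_of_all _ (aux_bdd (X := I l) f).choose_spec)
  have expand : ∀ ω : Ω, (∑ l, f (I l ω))^2 = ∑ l, ∑ m, f (I l ω) * f (I m ω) := by
    intro ω; rw [sq, Finset.sum_mul_sum]
  simp_rw [expand]
  rw [integral_finset_sum _ fun l _ => integrable_finset_sum _ fun m _ => hint l m]
  have h1 : ∀ l : Fin K, ∫ ω, ∑ m, f (I l ω) * f (I m ω) ∂P = ∑ k, p k * (f k)^2 := by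
    intro l
    rw [integral_finset_sum _ fun m _ => hint l m]
    have hcross : ∀ m ∈ Finset.univ, m ≠ l → ∫ ω, f (I l ω) * f (I m ω) ∂P = 0 := by
      intro m _ hml
      have hind : IndepFun (fun ω => f (I l ω)) (fun ω => f (I m ω)) P :=
        (hindep.indepFun (Ne.symm hml)).comp
          (measurable_from_top (f := f)) (measurable_from_top (f := f))
      have heq : ∫ ω, f (I l ω) * f (I m ω) ∂P =
          (∫ ω, f (I l ω) ∂P) * (∫ ω, f (I m ω) ∂P) :=
        hind.integral_fun_mul_eq_mul_integral (hmf f l).aestronglyMeasurable (hmf f m).aestronglyMeasurable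
      rw [heq, aux_integral (hmeas l) p hp (hdist l) f, hf0, zero_mul]
    rw [Finset.sum_eq_single l hcross (fun h => absurd (Finset.mem_univ l) h)]
    have hsq : ∀ ω, f (I l ω) * f (I l ω) = (fun k => (f k)^2) (I l ω) :=
      fun ω => (sq (f (I l ω))).symm
    simp_rw [hsq]
    exact aux_integral (hmeas l) p hp (hdist l) (fun k => (f k)^2)
  rw [Finset.sum_congr rfl fun l _ => h1 l]
  rw [Finset.sum_const, Finset.card_univ, Fintype.card_fin, nsmul_eq_mul]

lemma aux_sq_int {K : ℕ} (I : Fin K → Ω → Fin n) (hmeas : ∀ l, Measurable (I l))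
    (f : Fin n → ℝ) (c : ℝ) :
    Integrable (fun ω => (c * ∑ l, f (I l ω))^2) P := by
  have hmf : ∀ (l : Fin K), Measurable (fun ω => f (I l ω)) :=
    fun l => (measurable_from_top (f := f)).comp (hmeas l)
  have hint : ∀ l m : Fin K, Integrable (fun ω => f (I l ω) * f (I m ω)) P := fun l m =>
    (aux_integrable (hmeas m) f).bdd_mul (hmf l).aestronglyMeasurable (ae_of_all _ (aux_bdd (X := I l) f).choose_spec)
  have expand : ∀ ω : Ω, (c * ∑ l, f (I l ω))^2
      = c^2 * ∑ l, ∑ m, f (I l ω) * f (I m ω) := by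
    intro ω; rw [mul_pow, sq (∑ l, f (I l ω)), Finset.sum_mul_sum]
  simp_rw [expand]
  exact (integrable_finset_sum _ fun l _ =>
    integrable_finset_sum _ fun m _ => hint l m).const_mul _

end Aux

lemma euclid_norm_sq {d : ℕ} (x : EuclideanSpace ℝ (Fin d)) : ‖x‖^2 = ∑ i, (x i)^2 := by
  rw [EuclideanSpace.norm_eq, Real.sq_sqrt (by positivity)]
  simp [sq_abs]

lemma euclid_sum_apply {d n : ℕ} (v : Fin n → EuclideanSpace ℝ (Fin d)) (i : Fin d) :
    (∑ k, v k) i = ∑ k, (v k) i := by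
  induction (Finset.univ : Finset (Fin n)) using Finset.induction with
  | empty => simp
  | insert a s h ih => simp_all [Finset.sum_insert h]

lemma euclid_sum_smul_apply {d n : ℕ} (p : Fin n → ℝ) (v : Fin n → EuclideanSpace ℝ (Fin d))
    (i : Fin d) : (∑ k, p k • v k) i = ∑ k, p k * v k i := by
  induction (Finset.univ : Finset (Fin n)) using Finset.induction with
  | empty => simp
  | insert a s h ih => simp_all [Finset.sum_insert h]

lemma bias_var {d n : ℕ} (p : Fin n → ℝ) (hsum : ∑ k, p k = 1)
    (v : Fin n → EuclideanSpace ℝ (Fin d)) (w₀ : EuclideanSpace ℝ (Fin d)) :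
    ∑ k, p k * ‖v k - ∑ j, p j • v j‖^2 ≤ ∑ k, p k * ‖v k - w₀‖^2 := by
  set vb : EuclideanSpace ℝ (Fin d) := ∑ j, p j • v j with hvb
  have key : ∀ k, ‖v k - w₀‖^2
      = ‖v k - vb‖^2 + 2 * (inner ℝ (v k - vb) (vb - w₀) : ℝ) + ‖vb - w₀‖^2 := by
    intro k
    have h : v k - w₀ = (v k - vb) + (vb - w₀) := by abel
    rw [h, ← real_inner_self_eq_norm_sq, inner_add_add_self, real_inner_self_eq_norm_sq,
      real_inner_self_eq_norm_sq, real_inner_comm (vb - w₀)]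
    ring
  have hmid : ∑ k, p k * (inner ℝ (v k - vb) (vb - w₀) : ℝ) = 0 := by
    have : ∑ k, p k * (inner ℝ (v k - vb) (vb - w₀) : ℝ)
        = (inner ℝ (∑ k, p k • (v k - vb)) (vb - w₀) : ℝ) := by
      rw [sum_inner]
      exact Finset.sum_congr rfl fun k _ => (real_inner_smul_left _ _ _).symm
    rw [this]
    have hz : ∑ k, p k • (v k - vb) = 0 := by
      simp_rw [smul_sub]
      rw [Finset.sum_sub_distrib, ← Finset.sum_smul, hsum, one_smul, ← hvb, sub_self]
    rw [hz, inner_zero_left]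
  calc ∑ k, p k * ‖v k - vb‖^2
      ≤ ∑ k, p k * ‖v k - vb‖^2 + ‖vb - w₀‖^2 :=
        le_add_of_nonneg_right (sq_nonneg _)
    _ = ∑ k, p k * ‖v k - w₀‖^2 := by
        simp_rw [key, mul_add]
        rw [Finset.sum_add_distrib, Finset.sum_add_distrib, ← Finset.sum_mul, hsum, one_mul]
        have h2 : ∀ k : Fin n, p k * (2 * (inner ℝ (v k - vb) (vb - w₀) : ℝ))
            = 2 * (p k * (inner ℝ (v k - vb) (vb - w₀) : ℝ)) := fun k => by ring
        rw [Finset.sum_congr rfl fun k _ => h2 k, ← Finset.mul_sum, hmid, mul_zero, add_zero]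

theorem stmt_6 {d n K Epochs : ℕ} {Ω : Type*} [MeasurableSpace Ω] (P : Measure Ω)
    [IsProbabilityMeasure P] (hK : 0 < K)
    (p : Fin n → ℝ) (hp : ∀ k, 0 ≤ p k) (hsum : ∑ k, p k = 1)
    (w₀ : EuclideanSpace ℝ (Fin d))
    (g : Fin n → Fin Epochs → EuclideanSpace ℝ (Fin d)) (G : ℝ)
    (hg : ∀ k t, ‖g k t‖ ≤ G)
    (ηt : Fin Epochs → ℝ) (η₀ η : ℝ)
    (hηt0 : ∀ t, 0 ≤ ηt t) (hηt : ∀ t, ηt t ≤ η₀) (hη₀ : η₀ ≤ 2 * η)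
    (v : Fin n → EuclideanSpace ℝ (Fin d))
    (hv : ∀ k, v k = w₀ - ∑ t, ηt t • g k t)
    (I : Fin K → Ω → Fin n) (hmeas : ∀ l, Measurable (I l))
    (hindep : ProbabilityTheory.iIndepFun I P)
    (hdist : ∀ l k, P {ω | I l ω = k} = ENNReal.ofReal (p k)) :
    (∫ ω, ‖(K : ℝ)⁻¹ • ∑ l, v (I l ω) - ∑ k, p k • v k‖ ^ 2 ∂P) ≤
      4 / K * η ^ 2 * Epochs ^ 2 * G ^ 2 := by
  have hKR : (0:ℝ) < (K:ℝ) := by exact_mod_cast hK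
  have hKne : (K:ℝ) ≠ 0 := ne_of_gt hKR
  set vb : EuclideanSpace ℝ (Fin d) := ∑ k, p k • v k with hvb
  -- centered coordinate functions
  set f : Fin d → Fin n → ℝ := fun i k => v k i - vb i with hf
  have hf0 : ∀ i, ∑ k, p k * f i k = 0 := by
    intro i
    simp_rw [hf, mul_sub]
    rw [Finset.sum_sub_distrib, ← Finset.sum_mul, hsum, one_mul,
      ← euclid_sum_smul_apply p v i, ← hvb, sub_self]
  -- pointwise rewrite of the integrand
  have hcoord : ∀ ω, ‖(K : ℝ)⁻¹ • ∑ l, v (I l ω) - vb‖ ^ 2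
      = ∑ i, ((K:ℝ)⁻¹ * ∑ l, f i (I l ω))^2 := by
    intro ω
    rw [euclid_norm_sq]
    refine Finset.sum_congr rfl fun i _ => ?_
    congr 1
    have h1 : ((K:ℝ)⁻¹ • ∑ l, v (I l ω) - vb) i
        = (K:ℝ)⁻¹ * (∑ l, v (I l ω) i) - vb i := by
      have h2 := euclid_sum_apply (fun l => v (I l ω)) i
      simp only [PiLp.sub_apply, PiLp.smul_apply, smul_eq_mul, h2]
    rw [h1]
    simp_rw [hf]
    rw [Finset.sum_sub_distrib, Finset.sum_const, Finset.card_univ, Fintype.card_fin,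
      nsmul_eq_mul, mul_sub, ← mul_assoc, inv_mul_cancel₀ hKne, one_mul]
  simp_rw [hcoord]
  rw [integral_finset_sum _ fun i _ => aux_sq_int I hmeas (f i) ((K:ℝ)⁻¹)]
  have hcoordint : ∀ i, ∫ ω, ((K:ℝ)⁻¹ * ∑ l, f i (I l ω))^2 ∂P
      = (K:ℝ)⁻¹ * ∑ k, p k * (f i k)^2 := by
    intro i
    have hpt : ∀ ω, ((K:ℝ)⁻¹ * ∑ l, f i (I l ω))^2
        = ((K:ℝ)⁻¹)^2 * (∑ l, f i (I l ω))^2 := fun ω => mul_pow _ _ _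
    simp_rw [hpt]
    rw [integral_const_mul, aux_var I hmeas hindep p hp hdist (f i) (hf0 i)]
    field_simp
  rw [Finset.sum_congr rfl fun i _ => hcoordint i]
  rw [← Finset.mul_sum, Finset.sum_comm]
  have hnorm : ∀ k, ∑ i, p k * (f i k)^2 = p k * ‖v k - vb‖^2 := by
    intro k
    rw [← Finset.mul_sum, euclid_norm_sq]
    have h3 : ∀ i : Fin d, (f i k)^2 = ((v k - vb) i)^2 := fun i => by simp [hf]
    rw [Finset.sum_congr rfl fun i _ => h3 i]
  rw [Finset.sum_congr rfl fun k _ => hnorm k]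
  -- drift bound
  have hdrift : ∀ k, ‖v k - w₀‖^2 ≤ 4 * η^2 * (Epochs:ℝ)^2 * G^2 := by
    intro k
    have h1 : ‖v k - w₀‖ ≤ (Epochs:ℝ) * (2 * η * G) := by
      rw [hv k]
      have h2 : w₀ - ∑ t, ηt t • g k t - w₀ = -(∑ t, ηt t • g k t) := by abel
      rw [h2, norm_neg]
      calc ‖∑ t, ηt t • g k t‖ ≤ ∑ t, ‖ηt t • g k t‖ := norm_sum_le _ _
        _ ≤ ∑ _t : Fin Epochs, (2 * η * G) := by
            refine Finset.sum_le_sum fun t _ => ?_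
            rw [norm_smul, Real.norm_eq_abs, abs_of_nonneg (hηt0 t)]
            exact mul_le_mul ((hηt t).trans hη₀) (hg k t) (norm_nonneg _)
              (le_trans (hηt0 t) ((hηt t).trans hη₀))
        _ = (Epochs:ℝ) * (2 * η * G) := by
            rw [Finset.sum_const, Finset.card_univ, Fintype.card_fin, nsmul_eq_mul]
    calc ‖v k - w₀‖^2 ≤ ((Epochs:ℝ) * (2 * η * G))^2 :=
          pow_le_pow_left₀ (norm_nonneg _) h1 2
      _ = 4 * η^2 * (Epochs:ℝ)^2 * G^2 := by ring
  have hsum2 : ∑ k, p k * ‖v k - vb‖^2 ≤ 4 * η^2 * (Epochs:ℝ)^2 * G^2 := by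
    calc ∑ k, p k * ‖v k - vb‖^2 ≤ ∑ k, p k * ‖v k - w₀‖^2 := bias_var p hsum v w₀
      _ ≤ ∑ k, p k * (4 * η^2 * (Epochs:ℝ)^2 * G^2) :=
          Finset.sum_le_sum fun k _ => mul_le_mul_of_nonneg_left (hdrift k) (hp k)
      _ = 4 * η^2 * (Epochs:ℝ)^2 * G^2 := by
          rw [← Finset.sum_mul, hsum, one_mul]
  calc (K:ℝ)⁻¹ * ∑ k, p k * ‖v k - vb‖^2
      ≤ (K:ℝ)⁻¹ * (4 * η^2 * (Epochs:ℝ)^2 * G^2) :=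
        mul_le_mul_of_nonneg_left hsum2 (inv_nonneg.mpr hKR.le)
    _ = 4 / K * η ^ 2 * (Epochs:ℝ) ^ 2 * G ^ 2 := by
        rw [div_eq_mul_inv]
        ring
end

section
/- Let μ > 0 and η ∈ (0, 1/μ]. For nonnegative reals a, b with a ≤ (1 - ημ) c + η² b for some c ≥ 0, and suppose c ≤ v/(r+γ) where v ≥ β² b/(βμ - 1), η = β/(r+γ), β > 1/μ, γ > 0, r ≥ 1. Then a ≤ v/(r+γ+1). -/
theorem stmt_13 (μ η a b c v β γ : ℝ) (r : ℕ)
    (hμ : 0 < μ) (hη : 0 < η) (hη' : η ≤ 1 / μ)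
    (ha : 0 ≤ a) (hb : 0 ≤ b) (hc : 0 ≤ c)
    (hrec : a ≤ (1 - η * μ) * c + η ^ 2 * b)
    (hcv : c ≤ v / (r + γ)) (hv : β ^ 2 * b / (β * μ - 1) ≤ v)
    (hηdef : η = β / (r + γ)) (hβ : 1 / μ < β) (hγ : 0 < γ) (hr : 1 ≤ r) :
    a ≤ v / (r + γ + 1) := by
  set t : ℝ := (r : ℝ) + γ with htdef
  have hr1 : (1 : ℝ) ≤ (r : ℝ) := by exact_mod_cast hr
  have ht1 : 1 < t := by simp only [htdef]; linarith
  have ht : 0 < t := by linarith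
  have hβμ : 1 < β * μ := by
    have := (div_lt_iff₀ hμ).mp hβ; linarith
  have hβ0 : 0 < β := by
    have : 0 < 1 / μ := by positivity
    linarith
  have hbb : β ^ 2 * b ≤ (β * μ - 1) * v := by
    have h := (div_le_iff₀ (by linarith : (0:ℝ) < β * μ - 1)).mp hv
    linarith
  have hv0 : 0 ≤ v := by
    have : 0 ≤ β ^ 2 * b / (β * μ - 1) :=
      div_nonneg (by positivity) (by linarith)
    linarith
  have hημ : 1 - η * μ ≥ 0 := by
    have := (le_div_iff₀ hμ).mp hη'
    linarith
  have step1 : a ≤ (1 - η * μ) * (v / t) + η ^ 2 * b := by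
    have := mul_le_mul_of_nonneg_left hcv hημ
    linarith
  have hη2 : η = β / t := hηdef
  have key : (1 - η * μ) * (v / t) + η ^ 2 * b ≤ v / (t + 1) := by
    have ht0 : t ≠ 0 := ne_of_gt ht
    rw [hη2, show (1 - β / t * μ) * (v / t) + (β / t) ^ 2 * b
        = ((t - β * μ) * v + β ^ 2 * b) / t ^ 2 by field_simp,
      div_le_div_iff₀ (by positivity) (by linarith : (0:ℝ) < t + 1)]
    nlinarith [mul_le_mul_of_nonneg_right hbb (by linarith : (0:ℝ) ≤ t + 1)]
  calc a ≤ (1 - η * μ) * (v / t) + η ^ 2 * b := step1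
    _ ≤ v / (t + 1) := key
end
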